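/- One has #{(i,j) : 1 ≤ i ≤ p−1, 1 ≤ j ≤ q−1, and 2(pq + δ) ≤ 2(iq + jp) < 3pq} ≤ q − 1. (In terms of the spectrum, the number of spectral numbers i/p + j/q lying in the interval [1 + δ/(pq), 3/2) is at most q − 1.) -/

import Mathlib

/-- the number of pairs `(i,j)` with `1 ≤ i ≤ p−1`, `1 ≤ j ≤ q−1` and
`2(pq + δ) ≤ 2(iq + jp) < 3pq` is at most `q − 1`; these pairs count the spectral numbers
`i/p + j/q` of `x^p + y^q = 0` lying in the interval `[1 + δ/(pq), 3/2)`. -/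
theorem spectrum_count_le (p q : ℕ) (hp : 2 ≤ p) (hpq : p < q) (hcop : Nat.Coprime p q)
    (δ : ℕ) (hδ : 2 * δ = (p - 1) * (q - 1)) :
    Set.ncard {x : ℕ × ℕ | 1 ≤ x.1 ∧ x.1 ≤ p - 1 ∧ 1 ≤ x.2 ∧ x.2 ≤ q - 1 ∧
        2 * (p * q + δ) ≤ 2 * (x.1 * q + x.2 * p) ∧ 2 * (x.1 * q + x.2 * p) < 3 * (p * q)} ≤
      q - 1 := by
  classical
  have key : 2 * δ + p + q = p * q + 1 := by
    zify [show 1 ≤ p by omega, show 1 ≤ q by omega] at hδ ⊢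
    linear_combination hδ
  -- the set as a finset
  have hset : {x : ℕ × ℕ | 1 ≤ x.1 ∧ x.1 ≤ p - 1 ∧ 1 ≤ x.2 ∧ x.2 ≤ q - 1 ∧
        2 * (p * q + δ) ≤ 2 * (x.1 * q + x.2 * p) ∧ 2 * (x.1 * q + x.2 * p) < 3 * (p * q)}
      = ↑((Finset.Ico 1 p ×ˢ Finset.Ico 1 q).filter
          (fun x => 2 * (p * q + δ) ≤ 2 * (x.1 * q + x.2 * p) ∧
            2 * (x.1 * q + x.2 * p) < 3 * (p * q))) := by
    ext x
    simp only [Set.mem_setOf_eq, Finset.coe_filter, Finset.mem_product, Finset.mem_Ico,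
      Set.mem_setOf_eq]
    omega
  rw [hset, Set.ncard_coe_finset]
  have hcard := Finset.card_le_card_of_injOn (f := fun x : ℕ × ℕ => x.1 * q + x.2 * p)
    (s := (Finset.Ico 1 p ×ˢ Finset.Ico 1 q).filter
          (fun x => 2 * (p * q + δ) ≤ 2 * (x.1 * q + x.2 * p) ∧
            2 * (x.1 * q + x.2 * p) < 3 * (p * q)))
    (t := Finset.Ico (p * q + δ) ((3 * (p * q) + 1) / 2))
    (by
      intro x hx
      simp only [Finset.mem_coe, Finset.mem_filter, Finset.mem_product, Finset.mem_Ico] at hx ⊢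
      set m := p * q with hm
      set n := x.1 * q + x.2 * p with hn
      omega)
    (by
      intro a ha b hb hab
      simp only [Finset.mem_coe, Finset.mem_filter, Finset.mem_product, Finset.mem_Ico] at ha hb
      have hab' : a.1 * q + a.2 * p = b.1 * q + b.2 * p := hab
      have h0 : a.2 * p % p = 0 := Nat.mul_mod_left _ _
      have hmod : a.1 * q ≡ b.1 * q [MOD p] := by
        have h1 : a.1 * q + a.2 * p ≡ b.1 * q + b.2 * p [MOD p] := by rw [hab']
        have h2 : a.2 * p ≡ 0 [MOD p] := (Nat.modEq_zero_iff_dvd).2 ⟨a.2, by ring⟩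
        have h3 : b.2 * p ≡ 0 [MOD p] := (Nat.modEq_zero_iff_dvd).2 ⟨b.2, by ring⟩
        calc a.1 * q ≡ a.1 * q + a.2 * p [MOD p] := by
              simpa using (Nat.ModEq.refl (a.1 * q)).add h2.symm
          _ ≡ b.1 * q + b.2 * p [MOD p] := h1
          _ ≡ b.1 * q [MOD p] := by
              simpa using (Nat.ModEq.refl (b.1 * q)).add h3
      have hij : a.1 ≡ b.1 [MOD p] :=
        hmod.cancel_right_of_coprime (by
          simpa [Nat.Coprime, Nat.gcd_comm] using hcop)
      have h1 : a.1 = b.1 := by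
        rcases le_or_gt a.1 b.1 with h | h
        · have hd := (Nat.modEq_iff_dvd' h).1 hij
          have := Nat.eq_zero_of_dvd_of_lt hd (by omega)
          omega
        · have hd := (Nat.modEq_iff_dvd' h.le).1 hij.symm
          have := Nat.eq_zero_of_dvd_of_lt hd (by omega)
          omega
      have h2 : a.2 = b.2 := by
        rw [h1] at hab'
        have : a.2 * p = b.2 * p := by omega
        exact Nat.eq_of_mul_eq_mul_right (by omega) this
      exact Prod.ext h1 h2)
  refine le_trans hcard ?_
  rw [Nat.card_Ico]
  set m := p * q with hm
  omega
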